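/- Let G be an n-isobicyclic group, let p and q be distinct primes dividing n with q not dividing p − 1, let P be an abelian normal Sylow p-subgroup of G, and let Q be a Sylow q-subgroup of G. Then Q centralises P; that is, every element of Q commutes with every element of P. -/

import Mathlib

open scoped Pointwise

open Subgroup

/-- If every element of `K` is a product of an element of `H` and an element of `H'`,
then the quotients `H ⧸ H'.subgroupOf H` and `K ⧸ H'` are in bijection. -/
private lemma quot_bij {K : Type*} [Group K]
    (H H' : Subgroup K) (h : ∀ g : K, ∃ a ∈ H, ∃ b ∈ H', a * b = g) :
    ∃ f : (H ⧸ (H'.subgroupOf H)) → (K ⧸ H'), Function.Bijective f := by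
  refine ⟨Quotient.map' Subtype.val (fun a b hab => ?_), ?_, ?_⟩
  · rw [QuotientGroup.leftRel_apply] at hab ⊢
    simpa only [Subgroup.mem_subgroupOf, Subgroup.coe_mul, InvMemClass.coe_inv] using hab
  · refine Quotient.ind₂' fun a b hab => ?_
    rw [Quotient.map'_mk'', Quotient.map'_mk''] at hab
    have hr := Quotient.exact' hab
    rw [QuotientGroup.leftRel_apply] at hr
    apply Quotient.sound'
    rw [QuotientGroup.leftRel_apply]
    simpa only [Subgroup.mem_subgroupOf, Subgroup.coe_mul, InvMemClass.coe_inv] using hr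
  · refine Quotient.ind' fun g => ?_
    obtain ⟨a, ha, b, hb, hab⟩ := h g
    refine ⟨Quotient.mk'' ⟨a, ha⟩, ?_⟩
    rw [Quotient.map'_mk'']
    apply Quotient.sound'
    rw [QuotientGroup.leftRel_apply, ← hab, inv_mul_cancel_left]
    exact hb

private lemma card_dvd_mul {K : Type*} [Group K] [Finite K]
    (H H' : Subgroup K) (h : ∀ g : K, ∃ a ∈ H, ∃ b ∈ H', a * b = g) :
    Nat.card K ∣ Nat.card H * Nat.card H' := by
  obtain ⟨f, hf⟩ := quot_bij H H' h
  have h1 : (H'.subgroupOf H).index = H'.index := by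
    unfold Subgroup.index
    exact Nat.card_eq_of_bijective f hf
  calc Nat.card K = Nat.card H' * H'.index := (Subgroup.card_mul_index H').symm
    _ = Nat.card H' * (H'.subgroupOf H).index := by rw [h1]
    _ ∣ Nat.card H' * Nat.card H := mul_dvd_mul_left _ (Subgroup.index_dvd_card _)
    _ = Nat.card H * Nat.card H' := mul_comm _ _

private lemma card_mul_set {G : Type*} [Group G] (u v : G)
    (h : Subgroup.zpowers u ⊓ Subgroup.zpowers v = ⊥) :
    Nat.card (↑(Subgroup.zpowers u) * ↑(Subgroup.zpowers v) : Set G)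
      = orderOf u * orderOf v := by
  rw [← Nat.card_zpowers u, ← Nat.card_zpowers v, ← Nat.card_prod]
  refine (Nat.card_eq_of_bijective
    (fun z : (zpowers u) × (zpowers v) =>
      (⟨(z.1 : G) * (z.2 : G), Set.mul_mem_mul z.1.2 z.2.2⟩ :
        (↑(Subgroup.zpowers u) * ↑(Subgroup.zpowers v) : Set G))) ⟨?_, ?_⟩).symm
  · rintro ⟨⟨a, ha⟩, ⟨b, hb⟩⟩ ⟨⟨c, hc⟩, ⟨d, hd⟩⟩ hz
    have hz' : a * b = c * d := congrArg Subtype.val hz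
    have e : c⁻¹ * a = d * b⁻¹ := by
      have h' : a = c * (d * b⁻¹) := by rw [← mul_assoc, ← hz', mul_inv_cancel_right]
      rw [h', inv_mul_cancel_left]
    have whz : c⁻¹ * a ∈ Subgroup.zpowers u ⊓ Subgroup.zpowers v :=
      Subgroup.mem_inf.mpr ⟨mul_mem (inv_mem hc) ha, e ▸ mul_mem hd (inv_mem hb)⟩
    rw [h, Subgroup.mem_bot] at whz
    have hac : a = c := by
      have := inv_mul_eq_one.mp whz
      exact this.symm
    subst hac
    have hbd : b = d := by
      have := mul_left_cancel hz'
      exact this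
    subst hbd
    rfl
  · rintro ⟨w, hw⟩
    rw [Set.mem_mul] at hw
    obtain ⟨a, ha, b, hb, hab⟩ := hw
    exact ⟨(⟨a, ha⟩, ⟨b, hb⟩), Subtype.ext hab⟩

/-- The key computation: if `P = ⟨u⟩⟨v⟩` with `u, v` of order `p ^ e` and trivially
intersecting powers, `g` commutes with `u`, conjugates `v` into `P`, and `g ^ m`
centralises `P` with `p ∤ m`, then `g ^ (p - 1)` centralises `P`. -/
private lemma key_lemma {G : Type*} [Group G] (p e m : ℕ) (hp : p.Prime) (hm : ¬ p ∣ m)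
    (P : Subgroup G) (u v g : G)
    (hu : orderOf u = p ^ e) (hv : orderOf v = p ^ e)
    (hS : (P : Set G) = ↑(Subgroup.zpowers u) * ↑(Subgroup.zpowers v))
    (hUV : Subgroup.zpowers u ⊓ Subgroup.zpowers v = ⊥)
    (huv : u * v = v * u)
    (hgu : g * u = u * g)
    (hgP : g * v * g⁻¹ ∈ P)
    (hgm : ∀ w ∈ P, g ^ m * w = w * g ^ m) :
    ∀ w ∈ P, g ^ (p - 1) * w = w * g ^ (p - 1) := by
  have hm0 : m ≠ 0 := fun h => hm (h ▸ dvd_zero p)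
  have cuv : Commute u v := huv
  have cgu : Commute g u := hgu
  have hvP : v ∈ P := by
    rw [← SetLike.mem_coe, hS]
    exact ⟨1, SetLike.mem_coe.mpr (one_mem _), v, SetLike.mem_coe.mpr (mem_zpowers v), one_mul v⟩
  -- write the conjugate of v as u^i * v^j
  have hgP' : g * v * g⁻¹ ∈ (↑(Subgroup.zpowers u) * ↑(Subgroup.zpowers v) : Set G) := by
    rw [← hS]; exact SetLike.mem_coe.mpr hgP
  rw [Set.mem_mul] at hgP'
  obtain ⟨c0, hc0, d0, hd0, heq0⟩ := hgP'
  obtain ⟨i, rfl⟩ := mem_zpowers_iff.mp (SetLike.mem_coe.mp hc0)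
  obtain ⟨j, rfl⟩ := mem_zpowers_iff.mp (SetLike.mem_coe.mp hd0)
  have heq : g * v * g⁻¹ = u ^ i * v ^ j := heq0.symm
  -- main induction
  have ind : ∀ k : ℕ, ∃ R : ℤ, g ^ k * v * (g ^ k)⁻¹ = u ^ R * v ^ (j ^ k) := by
    intro k; induction k with
    | zero => exact ⟨0, by simp⟩
    | succ k ih =>
      obtain ⟨R, hR⟩ := ih
      refine ⟨R + i * j ^ k, ?_⟩
      have h1 : g ^ (k + 1) * v * (g ^ (k + 1))⁻¹
          = g * (g ^ k * v * (g ^ k)⁻¹) * g⁻¹ := by group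
      rw [h1, hR]
      have h2 : g * (u ^ R * v ^ (j ^ k)) * g⁻¹
          = (g * u ^ R * g⁻¹) * (g * v ^ (j ^ k) * g⁻¹) := by group
      rw [h2]
      have h3 : g * u ^ R * g⁻¹ = u ^ R := by
        rw [(cgu.zpow_right R).eq, mul_inv_cancel_right]
      have h4 : g * v ^ (j ^ k) * g⁻¹ = (g * v * g⁻¹) ^ (j ^ k) := conj_zpow.symm
      rw [h3, h4, heq, ((cuv.zpow_zpow i j).mul_zpow (j ^ k)), ← zpow_mul, ← zpow_mul,
        ← mul_assoc, ← zpow_add]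
      congr 1
      rw [pow_succ]
      ring
  -- step A : j^m ≡ 1 mod p^e
  obtain ⟨R, hRm⟩ := ind m
  have hAm : u ^ R * v ^ (j ^ m) = v := by
    rw [← hRm, hgm v hvP, mul_inv_cancel_right]
  have huRv : u ^ R = v ^ ((1 : ℤ) - j ^ m) := by
    have h' : u ^ R = v * (v ^ (j ^ m))⁻¹ := eq_mul_inv_iff_mul_eq.mpr hAm
    rw [h', zpow_sub, zpow_one]
  have huR1 : u ^ R = 1 := by
    have hmem : u ^ R ∈ zpowers u ⊓ zpowers v :=
      ⟨zpow_mem (mem_zpowers u) R, huRv ▸ zpow_mem (mem_zpowers v) _⟩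
    rwa [hUV, Subgroup.mem_bot] at hmem
  have hvpow : v ^ ((1 : ℤ) - j ^ m) = 1 := by rw [← huRv, huR1]
  have hdvd1 : ((p ^ e : ℕ) : ℤ) ∣ 1 - j ^ m := by
    rw [← hv]
    exact orderOf_dvd_iff_zpow_eq_one.mpr hvpow
  have hεm : (j : ZMod (p ^ e)) ^ m = 1 := by
    have h0 : ((1 - j ^ m : ℤ) : ZMod (p ^ e)) = 0 :=
      (ZMod.intCast_zmod_eq_zero_iff_dvd _ _).mpr hdvd1
    push_cast at h0
    exact (sub_eq_zero.mp h0).symm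
  rcases Nat.eq_zero_or_pos e with he0 | hepos
  · -- trivial case: u = v = 1, so P = {1}
    intro w hw
    have hu1 : u = 1 := orderOf_eq_one_iff.mp (by rw [hu, he0, pow_zero])
    have hv1 : v = 1 := orderOf_eq_one_iff.mp (by rw [hv, he0, pow_zero])
    have hw' : w ∈ (↑(Subgroup.zpowers u) * ↑(Subgroup.zpowers v) : Set G) := by
      rw [← hS]; exact SetLike.mem_coe.mpr hw
    rw [Set.mem_mul] at hw'
    obtain ⟨c, hc, d, hd, rfl⟩ := hw'
    obtain ⟨s, rfl⟩ := mem_zpowers_iff.mp (SetLike.mem_coe.mp hc)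
    obtain ⟨t, rfl⟩ := mem_zpowers_iff.mp (SetLike.mem_coe.mp hd)
    rw [hu1, hv1]
    simp
  · haveI : NeZero (p ^ e) := ⟨pow_ne_zero e hp.pos.ne'⟩
    have hord : orderOf ((j : ZMod (p ^ e))) ∣ m := orderOf_dvd_of_pow_eq_one hεm
    have hεu : IsUnit ((j : ZMod (p ^ e))) := IsUnit.of_pow_eq_one hεm hm0
    have hcard : orderOf ((j : ZMod (p ^ e))) ∣ p ^ (e - 1) * (p - 1) := by
      rw [← Nat.totient_prime_pow hp hepos]
      have hd := orderOf_dvd_card (x := hεu.unit)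
      rw [ZMod.card_units_eq_totient] at hd
      rwa [← orderOf_units, hεu.unit_spec] at hd
    have hcop : (orderOf ((j : ZMod (p ^ e)))).Coprime (p ^ (e - 1)) :=
      Nat.Coprime.pow_right _ (((Nat.Prime.coprime_iff_not_dvd hp).mpr
        (fun hd => hm (hd.trans hord))).symm)
    have hordp : orderOf ((j : ZMod (p ^ e))) ∣ p - 1 := hcop.dvd_of_dvd_mul_left hcard
    have hεp : ((j : ZMod (p ^ e))) ^ (p - 1) = 1 := orderOf_dvd_iff_pow_eq_one.mp hordp
    have hdvd2 : ((p ^ e : ℕ) : ℤ) ∣ j ^ (p - 1) - 1 := by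
      rw [← ZMod.intCast_zmod_eq_zero_iff_dvd]
      push_cast
      rw [hεp, sub_self]
    -- step C
    obtain ⟨R', hR'⟩ := ind (p - 1)
    have hvj : v ^ (j ^ (p - 1)) = v := by
      have h5 : v ^ ((j ^ (p - 1) : ℤ) - 1) = 1 :=
        orderOf_dvd_iff_zpow_eq_one.mp (by rw [hv]; exact_mod_cast hdvd2)
      have h6 : v ^ (j ^ (p - 1)) = v ^ ((j ^ (p - 1) : ℤ) - 1) * v ^ (1 : ℤ) := by
        rw [← zpow_add]
        congr 1
        ring
      rw [h6, h5, one_mul, zpow_one]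
    have hC : g ^ (p - 1) * v * (g ^ (p - 1))⁻¹ = u ^ R' * v := by rw [hR', hvj]
    -- step D
    have cgpu : Commute (g ^ (p - 1)) u := cgu.pow_left _
    have indD : ∀ k : ℕ,
        (g ^ (p - 1)) ^ k * v * ((g ^ (p - 1)) ^ k)⁻¹ = u ^ ((k : ℤ) * R') * v := by
      intro k; induction k with
      | zero => simp
      | succ k ih =>
        have h1 : (g ^ (p - 1)) ^ (k + 1) * v * ((g ^ (p - 1)) ^ (k + 1))⁻¹
            = g ^ (p - 1) * ((g ^ (p - 1)) ^ k * v * ((g ^ (p - 1)) ^ k)⁻¹)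
              * (g ^ (p - 1))⁻¹ := by group
        rw [h1, ih]
        have h2 : g ^ (p - 1) * (u ^ ((k : ℤ) * R') * v) * (g ^ (p - 1))⁻¹
            = u ^ ((k : ℤ) * R') * (g ^ (p - 1) * v * (g ^ (p - 1))⁻¹) := by
          have hcom := (cgpu.zpow_right ((k : ℤ) * R')).eq
          calc g ^ (p - 1) * (u ^ ((k : ℤ) * R') * v) * (g ^ (p - 1))⁻¹
              = (g ^ (p - 1) * u ^ ((k : ℤ) * R')) * v * (g ^ (p - 1))⁻¹ := by group
            _ = (u ^ ((k : ℤ) * R') * g ^ (p - 1)) * v * (g ^ (p - 1))⁻¹ := by rw [hcom]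
            _ = u ^ ((k : ℤ) * R') * (g ^ (p - 1) * v * (g ^ (p - 1))⁻¹) := by group
        rw [h2, hC, ← mul_assoc, ← zpow_add]
        congr 2
        push_cast
        ring
    have hgv1 : Commute (g ^ ((p - 1) * p ^ e)) v := by
      have hD := indD (p ^ e)
      rw [← pow_mul] at hD
      have hu1' : u ^ (((p ^ e : ℕ) : ℤ) * R') = 1 := by
        rw [zpow_mul]
        have : u ^ ((p ^ e : ℕ) : ℤ) = 1 := by
          rw [zpow_natCast, ← hu, pow_orderOf_eq_one]
        rw [this, one_zpow]
      rw [hu1', one_mul] at hD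
      have hcv : g ^ ((p - 1) * p ^ e) * v = v * g ^ ((p - 1) * p ^ e) := by
        calc g ^ ((p - 1) * p ^ e) * v
            = (g ^ ((p - 1) * p ^ e) * v * (g ^ ((p - 1) * p ^ e))⁻¹)
              * g ^ ((p - 1) * p ^ e) := by group
          _ = v * g ^ ((p - 1) * p ^ e) := by rw [hD]
      exact hcv
    have hgu1 : Commute (g ^ ((p - 1) * p ^ e)) u := cgu.pow_left _
    have c1 : ∀ w ∈ P, Commute (g ^ ((p - 1) * p ^ e)) w := by
      intro w hw
      have hw' : w ∈ (↑(Subgroup.zpowers u) * ↑(Subgroup.zpowers v) : Set G) := by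
        rw [← hS]; exact SetLike.mem_coe.mpr hw
      rw [Set.mem_mul] at hw'
      obtain ⟨c, hc, d, hd, rfl⟩ := hw'
      obtain ⟨s, rfl⟩ := mem_zpowers_iff.mp (SetLike.mem_coe.mp hc)
      obtain ⟨t, rfl⟩ := mem_zpowers_iff.mp (SetLike.mem_coe.mp hd)
      exact (hgu1.zpow_right s).mul_right (hgv1.zpow_right t)
    have c2 : ∀ w ∈ P, Commute (g ^ ((p - 1) * m)) w := by
      intro w hw
      have hcom : Commute (g ^ m) w := hgm w hw
      rw [mul_comm, pow_mul]
      exact hcom.pow_left (p - 1)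
    have hcop2 : IsCoprime ((p ^ e : ℕ) : ℤ) ((m : ℕ) : ℤ) := by
      rw [Nat.isCoprime_iff_coprime]
      exact Nat.Coprime.pow_left _ ((Nat.Prime.coprime_iff_not_dvd hp).mpr hm)
    obtain ⟨cz, dz, hcd⟩ := hcop2
    intro w hw
    have keyeq : ∀ r : ℕ, g ^ r = (g ^ (r * p ^ e)) ^ cz * (g ^ (r * m)) ^ dz := by
      intro r
      rw [← zpow_natCast g r, ← zpow_natCast g (r * p ^ e),
        ← zpow_natCast g (r * m), ← zpow_mul, ← zpow_mul, ← zpow_add]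
      congr 1
      push_cast
      push_cast at hcd
      linear_combination (-(r : ℤ)) * hcd
    rw [keyeq (p - 1)]
    exact (((c1 w hw).zpow_left cz).mul_left ((c2 w hw).zpow_left dz)).eq

/-- Corollary 7.3, second part. If `G` is `n`-isobicyclic, `P` an abelian
normal Sylow `p`-subgroup, `Q` a Sylow `q`-subgroup for a prime `q ≠ p` with `q ∤ p − 1`,
then `Q` centralises `P`. -/
theorem sylow_acts_trivially_when_q_not_dvd_p_sub_one
    {G : Type*} [Group G] [Finite G] (n : ℕ) (hn : 0 < n) (x y : G)
    (hx : orderOf x = n) (hy : orderOf y = n)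
    (hprod : (↑(Subgroup.zpowers x) * ↑(Subgroup.zpowers y) : Set G) = Set.univ)
    (hinter : Subgroup.zpowers x ⊓ Subgroup.zpowers y = ⊥)
    (α : G ≃* G) (hαx : α x = y) (hαy : α y = x)
    (p q : ℕ) (hp : p.Prime) (hq : q.Prime) (hpq : p ≠ q) (hpn : p ∣ n) (hqn : q ∣ n)
    (hqp : ¬ q ∣ p - 1)
    (P : Sylow p G) (hPnormal : (P : Subgroup G).Normal)
    (hPab : ∀ a ∈ (P : Subgroup G), ∀ b ∈ (P : Subgroup G), a * b = b * a)
    (Q : Sylow q G) :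
    ∀ a ∈ (Q : Subgroup G), ∀ b ∈ (P : Subgroup G), a * b = b * a := by
  haveI hfp : Fact p.Prime := ⟨hp⟩
  haveI hfq : Fact q.Prime := ⟨hq⟩
  have hn0 : n ≠ 0 := hn.ne'
  -- cardinality of G
  have hcardG : Nat.card G = n * n := by
    have h2 := card_mul_set x y hinter
    rw [hprod, hx, hy] at h2
    rw [← h2, Nat.card_coe_set_eq, Set.ncard_univ]
  set e := n.factorization p with he
  set m := n / p ^ e with hmdef
  have hnm : p ^ e * m = n := Nat.ordProj_mul_ordCompl_eq_self n p
  have hpm : ¬ p ∣ m := Nat.not_dvd_ordCompl hp hn0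
  have hm0 : m ≠ 0 := by
    intro h0
    rw [h0, mul_zero] at hnm
    exact hn0 hnm.symm
  have hmn : m ∣ n := ⟨p ^ e, by rw [← hnm, mul_comm]⟩
  -- every p-element lies in P
  have hmemP : ∀ (z : G) (k : ℕ), orderOf z = p ^ k → z ∈ (P : Subgroup G) := by
    intro z k hz
    have hzp : IsPGroup p (Subgroup.zpowers z) :=
      IsPGroup.of_card (by rw [Nat.card_zpowers, hz])
    obtain ⟨R, hR⟩ := hzp.exists_le_sylow
    have hRP : R = P := by
      obtain ⟨g, hg⟩ := MulAction.exists_smul_eq G R P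
      calc R = g⁻¹ • (g • R) := by rw [inv_smul_smul]
        _ = g⁻¹ • P := by rw [hg]
        _ = P := Sylow.smul_eq_of_normal
    rw [hRP] at hR
    exact hR (mem_zpowers z)
  -- the elements u, v of order p^e
  have hordu : orderOf (x ^ m) = p ^ e := by
    rw [orderOf_pow, hx, Nat.gcd_eq_right hmn, ← hnm,
      Nat.mul_div_cancel _ (Nat.pos_of_ne_zero hm0)]
  have hordv : orderOf (y ^ m) = p ^ e := by
    rw [orderOf_pow, hy, Nat.gcd_eq_right hmn, ← hnm,
      Nat.mul_div_cancel _ (Nat.pos_of_ne_zero hm0)]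
  have huP : x ^ m ∈ (P : Subgroup G) := hmemP _ e hordu
  have hvP : y ^ m ∈ (P : Subgroup G) := hmemP _ e hordv
  have hUV : Subgroup.zpowers (x ^ m) ⊓ Subgroup.zpowers (y ^ m) = ⊥ := by
    rw [eq_bot_iff, ← hinter]
    exact inf_le_inf (zpowers_le.mpr (pow_mem (mem_zpowers x) m))
      (zpowers_le.mpr (pow_mem (mem_zpowers y) m))
  have hUV' : Subgroup.zpowers (y ^ m) ⊓ Subgroup.zpowers (x ^ m) = ⊥ := by
    rw [inf_comm]; exact hUV
  -- cardinality of P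
  have hcardP : Nat.card (P : Subgroup G) = p ^ (e + e) := by
    rw [Sylow.card_eq_multiplicity, hcardG, Nat.factorization_mul hn0 hn0,
      Finsupp.add_apply, ← he]
  -- P is the product of the two cyclic subgroups
  have hprodP : ∀ w₁ w₂ : G, w₁ ∈ (P : Subgroup G) → w₂ ∈ (P : Subgroup G) →
      Subgroup.zpowers w₁ ⊓ Subgroup.zpowers w₂ = ⊥ →
      orderOf w₁ = p ^ e → orderOf w₂ = p ^ e →
      ((P : Subgroup G) : Set G) = ↑(Subgroup.zpowers w₁) * ↑(Subgroup.zpowers w₂) := by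
    intro w₁ w₂ h1 h2 hUVw ho1 ho2
    have hsub : (↑(Subgroup.zpowers w₁) * ↑(Subgroup.zpowers w₂) : Set G)
        ⊆ ((P : Subgroup G) : Set G) := by
      rintro t ht
      rw [Set.mem_mul] at ht
      obtain ⟨c, hc, d, hd, rfl⟩ := ht
      obtain ⟨s, rfl⟩ := mem_zpowers_iff.mp (SetLike.mem_coe.mp hc)
      obtain ⟨t', rfl⟩ := mem_zpowers_iff.mp (SetLike.mem_coe.mp hd)
      exact SetLike.mem_coe.mpr (mul_mem (zpow_mem h1 s) (zpow_mem h2 t'))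
    refine (Set.eq_of_subset_of_ncard_le hsub ?_ (Set.toFinite _)).symm
    rw [← Nat.card_coe_set_eq, ← Nat.card_coe_set_eq,
      card_mul_set _ _ hUVw, ho1, ho2]
    apply le_of_eq
    calc Nat.card ((P : Subgroup G) : Set G) = Nat.card (P : Subgroup G) := by
          simp only [SetLike.coe_sort_coe]
      _ = p ^ (e + e) := hcardP
      _ = p ^ e * p ^ e := pow_add p e e
  have hS : ((P : Subgroup G) : Set G)
      = ↑(Subgroup.zpowers (x ^ m)) * ↑(Subgroup.zpowers (y ^ m)) :=
    hprodP _ _ huP hvP hUV hordu hordv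
  have hS' : ((P : Subgroup G) : Set G)
      = ↑(Subgroup.zpowers (y ^ m)) * ↑(Subgroup.zpowers (x ^ m)) :=
    hprodP _ _ hvP huP hUV' hordv hordu
  -- x^(p-1) and y^(p-1) centralise P
  have hxc : ∀ w ∈ (P : Subgroup G), x ^ (p - 1) * w = w * x ^ (p - 1) := by
    refine key_lemma p e m hp hpm (P : Subgroup G) (x ^ m) (y ^ m) x hordu hordv hS hUV
      (hPab _ huP _ hvP) ((Commute.refl x).pow_right m).eq
      (hPnormal.conj_mem _ hvP x) ?_
    intro w hw
    exact hPab _ huP w hw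
  have hyc : ∀ w ∈ (P : Subgroup G), y ^ (p - 1) * w = w * y ^ (p - 1) := by
    refine key_lemma p e m hp hpm (P : Subgroup G) (y ^ m) (x ^ m) y hordv hordu hS' hUV'
      (hPab _ hvP _ huP) ((Commute.refl y).pow_right m).eq
      (hPnormal.conj_mem _ huP y) ?_
    intro w hw
    exact hPab _ hvP w hw
  -- the centralizer
  set C := Subgroup.centralizer ((P : Subgroup G) : Set G) with hC
  haveI hCn : C.Normal := by
    constructor
    intro c hc g
    rw [hC, Subgroup.mem_centralizer_iff] at hc ⊢
    intro h hh
    have hh' : g⁻¹ * h * g ∈ ((P : Subgroup G) : Set G) := by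
      have := hPnormal.conj_mem h (SetLike.mem_coe.mp hh) g⁻¹
      simp only [inv_inv] at this; exact this
    have eqn := hc _ hh'
    have := congrArg (fun z => g * z * g⁻¹) eqn
    simpa [mul_assoc] using this
  have hxC : x ^ (p - 1) ∈ C :=
    Subgroup.mem_centralizer_iff.mpr (fun w hw => (hxc w (SetLike.mem_coe.mp hw)).symm)
  have hyC : y ^ (p - 1) ∈ C :=
    Subgroup.mem_centralizer_iff.mpr (fun w hw => (hyc w (SetLike.mem_coe.mp hw)).symm)
  -- the quotient G / C
  have hox : orderOf ((x : G ⧸ C)) ∣ p - 1 :=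
    orderOf_dvd_of_pow_eq_one (by
      rw [← QuotientGroup.mk_pow, QuotientGroup.eq_one_iff]
      exact hxC)
  have hoy : orderOf ((y : G ⧸ C)) ∣ p - 1 :=
    orderOf_dvd_of_pow_eq_one (by
      rw [← QuotientGroup.mk_pow, QuotientGroup.eq_one_iff]
      exact hyC)
  have hsurj : ∀ g : G ⧸ C, ∃ a ∈ Subgroup.zpowers ((x : G ⧸ C)),
      ∃ b ∈ Subgroup.zpowers ((y : G ⧸ C)), a * b = g := by
    intro g
    obtain ⟨w, rfl⟩ := QuotientGroup.mk_surjective g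
    have hw : w ∈ (↑(Subgroup.zpowers x) * ↑(Subgroup.zpowers y) : Set G) := by
      rw [hprod]; trivial
    rw [Set.mem_mul] at hw
    obtain ⟨c, hc, d, hd, rfl⟩ := hw
    obtain ⟨i, rfl⟩ := mem_zpowers_iff.mp (SetLike.mem_coe.mp hc)
    obtain ⟨j, rfl⟩ := mem_zpowers_iff.mp (SetLike.mem_coe.mp hd)
    refine ⟨(x : G ⧸ C) ^ i, zpow_mem (mem_zpowers _) i,
      (y : G ⧸ C) ^ j, zpow_mem (mem_zpowers _) j, ?_⟩
    rw [QuotientGroup.mk_mul, QuotientGroup.mk_zpow, QuotientGroup.mk_zpow]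
  have hdvdK : Nat.card (G ⧸ C) ∣ (p - 1) * (p - 1) := by
    refine dvd_trans (card_dvd_mul _ _ hsurj) (mul_dvd_mul ?_ ?_)
    · rw [Nat.card_zpowers]; exact hox
    · rw [Nat.card_zpowers]; exact hoy
  -- conclusion
  intro a ha b hb
  obtain ⟨k, hk⟩ := Q.isPGroup' ⟨a, ha⟩
  have hk' : a ^ (q ^ k) = 1 := by
    simpa using congrArg Subtype.val hk
  have h1 : ((a : G ⧸ C)) ^ (q ^ k) = 1 := by
    rw [← QuotientGroup.mk_pow, hk']
    rfl
  have hdq : orderOf ((a : G ⧸ C)) ∣ q ^ k := orderOf_dvd_of_pow_eq_one h1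
  have hdc : orderOf ((a : G ⧸ C)) ∣ (p - 1) * (p - 1) :=
    dvd_trans (orderOf_dvd_natCard _) hdvdK
  obtain ⟨t, htk, hteq⟩ := (Nat.dvd_prime_pow hq).mp hdq
  have ht0 : t = 0 := by
    by_contra h0
    have hqo : q ∣ orderOf ((a : G ⧸ C)) := hteq ▸ dvd_pow_self q h0
    have hq2 : q ∣ (p - 1) * (p - 1) := hqo.trans hdc
    rcases (Nat.Prime.dvd_mul hq).mp hq2 with h | h <;> exact hqp h
  have haone : (a : G ⧸ C) = 1 := by
    rw [← orderOf_eq_one_iff, hteq, ht0, pow_zero]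
  have haC : a ∈ C := (QuotientGroup.eq_one_iff a).mp haone
  rw [hC, Subgroup.mem_centralizer_iff] at haC
  exact (haC b (SetLike.mem_coe.mpr hb)).symm
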